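/- For every i ∈ {1,…,p} and every j ∈ {0,…,p−b−1} the following identity holds in R: X_i·ψ(b,j) − X_{b+i+j−ε(i,b+j)}·ψ(b, ε(i,b+j)−b) − X_p^a·φ(i, b+j) + X_0^{a+d}·( φ(i,j) − φ(b+i+j−p, p−b) ) = 0. In particular, this is an R-linear syzygy among the generators φ(i,j), ψ(b,i) of ℘. -/

import Mathlib

open MvPolynomial
open Fin.NatCast

/-- `ε(i,j) = i + j` if `i + j < p`, and `ε(i,j) = p` if `i + j ≥ p`. -/
def eps (p i j : ℕ) : ℕ := if i + j < p then i + j else p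

/-- The binomial `φ(i,j) = X_i·X_j − X_{ε(i,j)}·X_{i+j−ε(i,j)}` for `i, j ∈ {1,…,p−1}`,
with the convention `φ(i,j) = 0` whenever `i ∉ {1,…,p−1}` or `j ∉ {1,…,p−1}`.
(The symmetry convention `φ(i,j) = φ(j,i)` holds automatically for this formula.) -/
noncomputable def phiC (K : Type*) [Field K] (p i j : ℕ) : MvPolynomial (Fin (p + 1)) K :=
  if 1 ≤ i ∧ i < p ∧ 1 ≤ j ∧ j < p then
    X ((i : ℕ) : Fin (p + 1)) * X ((j : ℕ) : Fin (p + 1)) -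
      X ((eps p i j : ℕ) : Fin (p + 1)) * X ((i + j - eps p i j : ℕ) : Fin (p + 1))
  else 0

/-- The binomial `ψ(b,i) = X_{b+i}·X_p^a − X_i·X_0^{a+d}`. -/
noncomputable def psi (K : Type*) [Field K] (p a b d i : ℕ) : MvPolynomial (Fin (p + 1)) K :=
  X ((b + i : ℕ) : Fin (p + 1)) * (X ((p : ℕ) : Fin (p + 1))) ^ a -
    X ((i : ℕ) : Fin (p + 1)) * (X (0 : Fin (p + 1))) ^ (a + d)

/-- The defining binomial formula for `phiC` is valid for all `i, j ≤ p`: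
when the membership condition fails, the formula itself evaluates to `0`. -/
lemma phiC_eq (K : Type*) [Field K] (p i j : ℕ) (hi : i ≤ p) (hj : j ≤ p) :
    phiC K p i j = X ((i : ℕ) : Fin (p + 1)) * X ((j : ℕ) : Fin (p + 1)) -
      X ((eps p i j : ℕ) : Fin (p + 1)) * X ((i + j - eps p i j : ℕ) : Fin (p + 1)) := by
  unfold phiC
  split
  · rfl
  · rename_i h
    symm
    rw [sub_eq_zero]
    have hcases : i = 0 ∨ i = p ∨ j = 0 ∨ j = p := by omega
    rcases hcases with h0 | h0 | h0 | h0 <;> rw [h0]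
    · rcases lt_or_ge j p with hjp | hjp
      · have he : eps p 0 j = j := by simp [eps, hjp]
        rw [he]
        simp [mul_comm]
      · have hjp' : j = p := by omega
        rw [hjp']
        have he : eps p 0 p = p := by simp [eps]
        rw [he]
        simp [mul_comm]
    · have he : eps p p j = p := by simp [eps]
      rw [he, show p + j - p = j from by omega]
    · rcases lt_or_ge i p with hip | hip
      · have he : eps p i 0 = i := by simp [eps, hip]
        rw [he]
        simp
      · have hip' : i = p := by omega
        rw [hip']
        have he : eps p p 0 = p := by simp [eps]
        rw [he]
        simp
    · have he : eps p i p = p := by simp [eps]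
      rw [he, show i + p - p = i from by omega, mul_comm]

/-- For `i ∈ {1,…,p}` and `j ∈ {0,…,p−b−1}` the syzygy
`X_i·ψ(b,j) − X_{b+i+j−ε(i,b+j)}·ψ(b,ε(i,b+j)−b) − X_p^a·φ(i,b+j)
  + X_0^{a+d}·(φ(i,j) − φ(b+i+j−p, p−b)) = 0` holds in `R`. -/
theorem syzygy_A
    (K : Type*) [Field K]
    (p d a b : ℕ) (hp : 2 ≤ p) (hd : 1 ≤ d) (ha : 1 ≤ a) (hb1 : 1 ≤ b) (hbp : b ≤ p)
    (m : ℕ → ℕ) (hm : ∀ i, m i = a * p + b + i * d) :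
    ∀ i : ℕ, 1 ≤ i → i ≤ p → ∀ j : ℕ, b + j < p →
      X ((i : ℕ) : Fin (p + 1)) * psi K p a b d j -
        X ((b + i + j - eps p i (b + j) : ℕ) : Fin (p + 1)) *
          psi K p a b d (eps p i (b + j) - b) -
        (X ((p : ℕ) : Fin (p + 1))) ^ a * phiC K p i (b + j) +
        (X (0 : Fin (p + 1))) ^ (a + d) *
          (phiC K p i j - phiC K p (b + i + j - p) (p - b)) = 0 := by
  intro i hi1 hip j hbj
  rcases lt_or_ge (i + (b + j)) p with hlt | hge
  · -- Case A : i + b + j < p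
    have he : eps p i (b + j) = b + i + j := by simp [eps, hlt]; omega
    have hej : eps p i j = i + j := by simp [eps]; omega
    rw [he, show b + i + j - (b + i + j) = 0 from by omega,
        show b + i + j - b = i + j from by omega,
        show b + i + j - p = 0 from by omega]
    have h0 : phiC K p 0 (p - b) = 0 := by simp [phiC]
    rw [h0,
        phiC_eq K p i (b + j) (by omega) (by omega),
        phiC_eq K p i j (by omega) (by omega), he, hej,
        show i + (b + j) - (b + i + j) = 0 from by omega,
        show i + j - (i + j) = 0 from by omega]
    unfold psi
    rw [show b + (i + j) = b + i + j from by ring]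
    push_cast [Nat.cast_zero]
    ring
  · -- Case B : i + b + j ≥ p
    have he : eps p i (b + j) = p := by simp [eps]; omega
    have hee : eps p (b + i + j - p) (p - b) = eps p i j := by
      unfold eps
      rw [show b + i + j - p + (p - b) = i + j from by omega]
    rw [he,
        phiC_eq K p i (b + j) (by omega) (by omega), he,
        show i + (b + j) - p = b + i + j - p from by omega,
        phiC_eq K p i j (by omega) (by omega),
        phiC_eq K p (b + i + j - p) (p - b) (by omega) (by omega), hee,
        show b + i + j - p + (p - b) - eps p i j = i + j - eps p i j from by omega]
    unfold psi
    rw [show b + (p - b) = p from by omega]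
    ring
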